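/- Let a ≥ 3 be an integer. If a is odd, then S_2(a; 2, a) = (a−1)/2 − ⌊a/2⌋·(1 + ⌊a/2⌋)/(2a); if a is even, then S_2(a; 2, a) = (a−1)/2 − (1/4)·(a/2 − 1). -/

import Mathlib

/-- `S_2(a;b,c) = (1/a)·∑_{m=0}^{a−1} ⌊m·b/a⌋·⌊m·c/a⌋`. -/
def S2 (a b c : ℕ) : ℚ :=
  (1 / (a : ℚ)) * ∑ m ∈ Finset.range a, ((m * b / a : ℕ) : ℚ) * ((m * c / a : ℕ) : ℚ)

lemma gauss_q (n : ℕ) : ∑ m ∈ Finset.range n, (m : ℚ) = n * (n - 1) / 2 := by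
  induction n with
  | zero => simp
  | succ k ih =>
    rw [Finset.sum_range_succ, ih]
    push_cast
    ring

lemma S2_key (a : ℕ) (ha : 3 ≤ a) :
    S2 a 2 a = (1 / (a : ℚ)) *
      ((∑ m ∈ Finset.range a, (m : ℚ)) - ∑ m ∈ Finset.range ((a + 1) / 2), (m : ℚ)) := by
  have ht : (a + 1) / 2 ≤ a := by omega
  unfold S2
  congr 1
  rw [← Finset.sum_Ico_eq_sub _ ht, Finset.range_eq_Ico,
    ← Finset.sum_Ico_consecutive _ (Nat.zero_le ((a + 1) / 2)) ht]
  have h1 : ∑ m ∈ Finset.Ico 0 ((a + 1) / 2),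
      ((m * 2 / a : ℕ) : ℚ) * ((m * a / a : ℕ) : ℚ) = 0 := by
    apply Finset.sum_eq_zero
    intro m hm
    simp only [Finset.mem_Ico] at hm
    have : m * 2 / a = 0 := Nat.div_eq_of_lt (by omega)
    simp [this]
  have h2 : ∑ m ∈ Finset.Ico ((a + 1) / 2) a,
      ((m * 2 / a : ℕ) : ℚ) * ((m * a / a : ℕ) : ℚ)
      = ∑ m ∈ Finset.Ico ((a + 1) / 2) a, (m : ℚ) := by
    apply Finset.sum_congr rfl
    intro m hm
    simp only [Finset.mem_Ico] at hm
    have e1 : m * 2 / a = 1 := Nat.div_eq_of_lt_le (by omega) (by omega)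
    have e2 : m * a / a = m := Nat.mul_div_cancel m (by omega)
    rw [e1, e2]
    norm_num
  rw [h1, h2]
  ring

theorem S2_two_a (a : ℕ) (ha : 3 ≤ a) :
    (Odd a → S2 a 2 a = ((a : ℚ) - 1) / 2
      - ((a / 2 : ℕ) : ℚ) * (1 + ((a / 2 : ℕ) : ℚ)) / (2 * a))
    ∧ (Even a → S2 a 2 a = ((a : ℚ) - 1) / 2 - (1/4) * ((a : ℚ) / 2 - 1)) := by
  have hk := S2_key a ha
  rw [gauss_q, gauss_q] at hk
  constructor
  · rintro ⟨k, rfl⟩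
    have h1 : (2 * k + 1 + 1) / 2 = k + 1 := by omega
    have h2 : (2 * k + 1) / 2 = k := by omega
    rw [hk, h1, h2]
    have hk0 : (0 : ℚ) < 2 * (k : ℚ) + 1 := by positivity
    field_simp
    push_cast
    ring
  · rintro ⟨k, rfl⟩
    have hk3 : 2 ≤ k := by omega
    have h1 : (k + k + 1) / 2 = k := by omega
    have h2 : (k + k) / 2 = k := by omega
    rw [hk, h1]
    have hk0 : (0 : ℚ) < (k : ℚ) := by exact_mod_cast Nat.pos_of_ne_zero (by omega)
    field_simp
    push_cast
    ring
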